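/- Abstract small-gain lemma (core of Theorem 2): Let σ > 0, G ≥ 0, γ, β, κ, L̃, K̃ > 0 and set Φ = 2βγκL̃; assume Φ < 1. Suppose U, W, D : [0,∞) → [0,∞) satisfy, for all t ≥ 0: (i) W(t)·e^{σt} ≤ G·W(0) + γ·sup_{0 ≤ s ≤ t}(D(s)·e^{σs}); (ii) sup_{0 ≤ s ≤ t}(D(s)·e^{σs}) ≤ 2βκ·sup_{0 ≤ s ≤ t}(U(s)·e^{σs}); (iii) U(t) ≤ L̃·W(t) and W(t) ≤ K̃·U(t); and (iv) sup_{0 ≤ s ≤ t}(W(s)·e^{σs}) < ∞. Then U(t) ≤ G·(1−Φ)^{−1}·K̃·L̃·e^{−σt}·U(0) for all t ≥ 0. -/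

import Mathlib

open Set Filter

/-- abstract small-gain lemma, core of Theorem 2:
under the fading-memory estimates (i)–(iii) and the finiteness condition (iv),
the small-gain condition `Φ = 2βγκL̃ < 1` gives
`U(t) ≤ G (1−Φ)⁻¹ K̃ L̃ e^{−σt} U(0)`. -/
theorem statement_9 (σ G γ β κ Ltil Ktil : ℝ)
    (hσ : 0 < σ) (hG : 0 ≤ G) (hγ : 0 < γ) (hβ : 0 < β) (hκ : 0 < κ)
    (hL : 0 < Ltil) (hK : 0 < Ktil)
    (hΦ : 2 * β * γ * κ * Ltil < 1)
    (U W D : ℝ → ℝ)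
    (hUpos : ∀ t, 0 ≤ U t) (hWpos : ∀ t, 0 ≤ W t) (hDpos : ∀ t, 0 ≤ D t)
    (h1 : ∀ t ≥ (0:ℝ), W t * Real.exp (σ * t) ≤
      G * W 0 + γ * sSup ((fun s => D s * Real.exp (σ * s)) '' Set.Icc 0 t))
    (h2 : ∀ t ≥ (0:ℝ),
      sSup ((fun s => D s * Real.exp (σ * s)) '' Set.Icc 0 t) ≤
        2 * β * κ * sSup ((fun s => U s * Real.exp (σ * s)) '' Set.Icc 0 t))
    (h3 : ∀ t : ℝ, U t ≤ Ltil * W t ∧ W t ≤ Ktil * U t)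
    (h4 : ∀ t ≥ (0:ℝ), BddAbove ((fun s => W s * Real.exp (σ * s)) '' Set.Icc 0 t)) :
    ∀ t ≥ (0:ℝ),
      U t ≤ G * (1 - 2 * β * γ * κ * Ltil)⁻¹ * Ktil * Ltil * Real.exp (-σ * t) * U 0 := by
  intro t ht
  set f : ℝ → ℝ := fun s => W s * Real.exp (σ * s) with hf
  set g : ℝ → ℝ := fun s => U s * Real.exp (σ * s) with hg
  have h0t : (0:ℝ) ∈ Icc (0:ℝ) t := ⟨le_refl 0, ht⟩
  have hneW : (f '' Icc 0 t).Nonempty := ⟨f 0, 0, h0t, rfl⟩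
  have hneU : (g '' Icc 0 t).Nonempty := ⟨g 0, 0, h0t, rfl⟩
  have hbddW := h4 t ht
  obtain ⟨M, hM⟩ := hbddW
  have hbddW' : BddAbove (f '' Icc 0 t) := ⟨M, hM⟩
  have hgf : ∀ s, g s ≤ Ltil * f s := by
    intro s
    have he : (0:ℝ) < Real.exp (σ * s) := Real.exp_pos _
    have := (h3 s).1
    simp only [hf, hg]
    nlinarith [hWpos s, hUpos s]
  have hbddU : BddAbove (g '' Icc 0 t) := by
    refine ⟨Ltil * M, ?_⟩
    rintro _ ⟨s, hs, rfl⟩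
    have h1' : f s ≤ M := hM ⟨s, hs, rfl⟩
    calc g s ≤ Ltil * f s := hgf s
    _ ≤ Ltil * M := by nlinarith
  set SW := sSup (f '' Icc 0 t) with hSW
  set SU := sSup (g '' Icc 0 t) with hSU
  have hSUSW : SU ≤ Ltil * SW := by
    apply csSup_le hneU
    rintro _ ⟨s, hs, rfl⟩
    calc g s ≤ Ltil * f s := hgf s
    _ ≤ Ltil * SW := by
        have : f s ≤ SW := le_csSup hbddW' ⟨s, hs, rfl⟩
        nlinarith
  have hWt : f t ≤ SW := le_csSup hbddW' ⟨t, ⟨ht, le_refl t⟩, rfl⟩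
  have hSWnn : 0 ≤ SW := le_trans (by simpa [hf] using mul_nonneg (hWpos 0) (Real.exp_pos (σ*0)).le)
    (le_csSup hbddW' ⟨0, h0t, rfl⟩)
  have hkey : SW ≤ G * W 0 + γ * (2 * β * κ * SU) := by
    apply csSup_le hneW
    rintro _ ⟨s, hs, rfl⟩
    have hs0 : (0:ℝ) ≤ s := hs.1
    have e1 := h1 s hs0
    have e2 := h2 s hs0
    have hsub : g '' Icc 0 s ⊆ g '' Icc 0 t := Set.image_mono (f := g) (Set.Icc_subset_Icc_right hs.2)
    have hmono : sSup (g '' Icc 0 s) ≤ SU :=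
      csSup_le_csSup hbddU ⟨g 0, 0, ⟨le_refl 0, hs0⟩, rfl⟩ hsub
    have : sSup ((fun s => D s * Real.exp (σ * s)) '' Icc 0 s) ≤ 2 * β * κ * SU := by
      refine le_trans e2 ?_
      have : (0:ℝ) ≤ 2 * β * κ := by positivity
      exact mul_le_mul_of_nonneg_left hmono this
    simp only [hf]
    nlinarith [e1]
  have hΦpos : (0:ℝ) < 1 - 2 * β * γ * κ * Ltil := by linarith
  have hSWb : SW ≤ G * W 0 * (1 - 2 * β * γ * κ * Ltil)⁻¹ := by
    rw [ge_iff_le, ← div_eq_mul_inv] at *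
    rw [le_div_iff₀ hΦpos]
    have h5 : γ * (2 * β * κ * SU) ≤ γ * (2 * β * κ * (Ltil * SW)) := by
      have : (0:ℝ) ≤ γ * (2 * β * κ) := by positivity
      nlinarith
    nlinarith [hkey]
  have hE : (0:ℝ) < Real.exp (σ * t) := Real.exp_pos _
  have hfinal : U t * Real.exp (σ * t) ≤ G * (1 - 2 * β * γ * κ * Ltil)⁻¹ * Ktil * Ltil * U 0 := by
    have hUt : U t * Real.exp (σ * t) ≤ Ltil * f t := hgf t
    have hW0 : W 0 ≤ Ktil * U 0 := (h3 0).2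
    have hinv : (0:ℝ) ≤ (1 - 2 * β * γ * κ * Ltil)⁻¹ := (inv_pos.mpr hΦpos).le
    nlinarith [hWt, hSWb, mul_le_mul_of_nonneg_left hW0 (mul_nonneg (mul_nonneg hG hinv) hL.le)]
  rw [neg_mul, Real.exp_neg]
  rw [show G * (1 - 2 * β * γ * κ * Ltil)⁻¹ * Ktil * Ltil * (Real.exp (σ*t))⁻¹ * U 0
      = (G * (1 - 2 * β * γ * κ * Ltil)⁻¹ * Ktil * Ltil * U 0) * (Real.exp (σ*t))⁻¹ by ring]
  rw [← div_eq_mul_inv, le_div_iff₀ hE]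
  exact hfinal
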